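/- arXiv:1712.07641 — 2 statements merged into one kernel-verified Lean document; each statement's English description precedes it below -/
import Mathlib

section
/- Suppose a square-integrable random element X in H satisfies Γ₀ X = Z where Γ₀ is a boundedly invertible operator on a finite-dimensional subspace M_d of H, X and Z take values in M_d, and Σ(X), Σ(Z) are invertible on M_d. Then Σ(X)^{-1/2} X = U₀ Σ(Z)^{-1/2} Z, where U₀ = (Σ(Z)^{-1/2} Γ₀ Σ(X)^{1/2})* and Σ(Z)^{-1/2} Γ₀ Σ(X)^{1/2} is unitary on M_d (i.e., A₀A₀* = A₀*A₀ = P_{M_d}). -/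
open scoped RealInnerProductSpace
open MeasureTheory ContinuousLinearMap

/-- If `Γ₀ X = Z` with `Γ₀` boundedly invertible on the
finite-dimensional subspace `M_d` (with orthogonal projection `P`), `X, Z`
take values in `M_d`, and the covariance operators admit self-adjoint inverse
square roots within `M_d`, then `Σ(X)^{-1/2} X = U₀ Σ(Z)^{-1/2} Z` where
`U₀ = A₀*`, and `A₀ = Σ(Z)^{-1/2} Γ₀ Σ(X)^{1/2}` is unitary on `M_d`, i.e.
`A₀ A₀* = A₀* A₀ = P`. -/
theorem stmt_11 {H : Type*}
    [NormedAddCommGroup H] [InnerProductSpace ℝ H] [CompleteSpace H]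
    [TopologicalSpace.SeparableSpace H]
    {Ω : Type*} [MeasurableSpace Ω]
    (μ : Measure Ω) [IsProbabilityMeasure μ]
    (M : Submodule ℝ H) [FiniteDimensional ℝ M]
    (P : H →L[ℝ] H)
    (hP : P = M.subtypeL.comp M.orthogonalProjectionOnto)
    (X Z : Ω → H)
    (hX : MemLp X 2 μ) (hmean : ∫ ω, X ω ∂μ = 0)
    (hXM : ∀ ω, X ω ∈ M)
    (Γ₀ : H →L[ℝ] H) (hΓP : Γ₀.comp P = Γ₀ ∧ P.comp Γ₀ = Γ₀)
    -- `Γ₀` is boundedly invertible on `M_d`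
    (Γinv : H →L[ℝ] H) (hΓinvP : Γinv.comp P = Γinv ∧ P.comp Γinv = Γinv)
    (hΓinv : Γ₀.comp Γinv = P ∧ Γinv.comp Γ₀ = P)
    (hZ : ∀ ω, Z ω = Γ₀ (X ω))
    -- the covariance operators of `X` and `Z`, defined weakly
    (SX SZ : H →L[ℝ] H)
    (hSX : ∀ f g : H, ⟪f, SX g⟫ = ∫ ω, ⟪f, X ω⟫ * ⟪X ω, g⟫ ∂μ)
    (hSZ : ∀ f g : H, ⟪f, SZ g⟫ = ∫ ω, ⟪f, Z ω⟫ * ⟪Z ω, g⟫ ∂μ)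
    -- the self-adjoint square root of `Σ(X)` within `M_d`
    (SXhalf : H →L[ℝ] H) (hSXhalf_sa : IsSelfAdjoint SXhalf)
    (hSXhalfP : SXhalf.comp P = SXhalf ∧ P.comp SXhalf = SXhalf)
    (hSXhalf : SXhalf.comp SXhalf = SX)
    -- the self-adjoint inverse square root of `Σ(X)` within `M_d`
    (SXinvhalf : H →L[ℝ] H) (hSXinvhalf_sa : IsSelfAdjoint SXinvhalf)
    (hSXinvhalfP : SXinvhalf.comp P = SXinvhalf ∧ P.comp SXinvhalf = SXinvhalf)
    (hSXinvhalf : SXinvhalf.comp (SX.comp SXinvhalf) = P)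
    (hSXhalfinv : SXinvhalf.comp SXhalf = P ∧ SXhalf.comp SXinvhalf = P)
    -- the self-adjoint inverse square root of `Σ(Z)` within `M_d`
    (SZinvhalf : H →L[ℝ] H) (hSZinvhalf_sa : IsSelfAdjoint SZinvhalf)
    (hSZinvhalfP : SZinvhalf.comp P = SZinvhalf ∧ P.comp SZinvhalf = SZinvhalf)
    (hSZinvhalf : SZinvhalf.comp (SZ.comp SZinvhalf) = P) :
    (SZinvhalf.comp (Γ₀.comp SXhalf)).comp
        (ContinuousLinearMap.adjoint (SZinvhalf.comp (Γ₀.comp SXhalf))) = P ∧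
      (ContinuousLinearMap.adjoint (SZinvhalf.comp (Γ₀.comp SXhalf))).comp
        (SZinvhalf.comp (Γ₀.comp SXhalf)) = P ∧
      ∀ ω, SXinvhalf (X ω)
        = (ContinuousLinearMap.adjoint (SZinvhalf.comp (Γ₀.comp SXhalf)))
            (SZinvhalf (Z ω)) := by

  -- pointwise application of operator composition identities
  have app : ∀ (T S R : H →L[ℝ] H), T.comp S = R → ∀ y, T (S y) = R y := by
    intro T S R h y; rw [← h]; rfl
  set A₀ := SZinvhalf.comp (Γ₀.comp SXhalf) with hA₀
  set Γad := ContinuousLinearMap.adjoint Γ₀ with hΓad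
  have hadjX : ContinuousLinearMap.adjoint SXhalf = SXhalf := by
    rw [← ContinuousLinearMap.star_eq_adjoint]; exact hSXhalf_sa
  have hadjZ : ContinuousLinearMap.adjoint SZinvhalf = SZinvhalf := by
    rw [← ContinuousLinearMap.star_eq_adjoint]; exact hSZinvhalf_sa
  have hAadj : ContinuousLinearMap.adjoint A₀ = SXhalf.comp (Γad.comp SZinvhalf) := by
    rw [hA₀, ContinuousLinearMap.adjoint_comp, ContinuousLinearMap.adjoint_comp,
      hadjX, hadjZ, ContinuousLinearMap.comp_assoc]
  have hPmem : ∀ x, P x ∈ M := by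
    intro x; rw [hP]; exact (M.orthogonalProjectionOnto x).2
  have hPid : ∀ x ∈ M, P x = x := by
    intro x hx
    rw [hP]
    have : M.orthogonalProjectionOnto x = ⟨x, hx⟩ :=
      Submodule.orthogonalProjectionOnto_mem_subspace_eq_self (K := M) ⟨x, hx⟩
    simp [ContinuousLinearMap.comp_apply, this]
  -- Σ(Z) = Γ₀ Σ(X) Γ₀*
  have hSZeq : ∀ x, SZ x = Γ₀ (SX (Γad x)) := by
    intro x
    apply ext_inner_left ℝ
    intro f
    rw [hSZ f x]
    calc ∫ ω, ⟪f, Z ω⟫ * ⟪Z ω, x⟫ ∂μ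
        = ∫ ω, ⟪Γad f, X ω⟫ * ⟪X ω, Γad x⟫ ∂μ := by
          refine integral_congr_ae (Filter.Eventually.of_forall fun ω => ?_)
          simp only [hZ ω, hΓad, ContinuousLinearMap.adjoint_inner_left,
            ContinuousLinearMap.adjoint_inner_right]
      _ = ⟪Γad f, SX (Γad x)⟫ := (hSX _ _).symm
      _ = ⟪f, Γ₀ (SX (Γad x))⟫ := by rw [hΓad, ContinuousLinearMap.adjoint_inner_left]
  -- A₀ A₀* = P pointwise
  have hAA : ∀ x, A₀ (ContinuousLinearMap.adjoint A₀ x) = P x := by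
    intro x
    rw [hAadj]
    simp only [hA₀, ContinuousLinearMap.comp_apply]
    rw [app SXhalf SXhalf SX hSXhalf, ← hSZeq (SZinvhalf x)]
    exact app SZinvhalf (SZ.comp SZinvhalf) P hSZinvhalf x
  -- membership facts
  have memA : ∀ x, A₀ x ∈ M := by
    intro x
    have h1 : P (A₀ x) = A₀ x := by
      simp only [hA₀, ContinuousLinearMap.comp_apply]
      exact app P SZinvhalf SZinvhalf hSZinvhalfP.2 _
    rw [← h1]; exact hPmem _
  have memAad : ∀ x, ContinuousLinearMap.adjoint A₀ x ∈ M := by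
    intro x
    have h1 : P (ContinuousLinearMap.adjoint A₀ x) = ContinuousLinearMap.adjoint A₀ x := by
      rw [hAadj]
      simp only [ContinuousLinearMap.comp_apply]
      exact app P SXhalf SXhalf hSXhalfP.2 _
    rw [← h1]; exact hPmem _
  have hAP : ∀ x, A₀ (P x) = A₀ x := by
    intro x
    simp only [hA₀, ContinuousLinearMap.comp_apply]
    rw [app SXhalf P SXhalf hSXhalfP.1]
  -- finite-dimensional argument: right inverse implies left inverse
  let a : M →ₗ[ℝ] M := A₀.toLinearMap.restrict (p := M) (q := M) (fun x _ => memA x)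
  let b : M →ₗ[ℝ] M :=
    (ContinuousLinearMap.adjoint A₀).toLinearMap.restrict (p := M) (q := M)
      (fun x _ => memAad x)
  have hab : a * b = 1 := by
    apply LinearMap.ext
    intro x
    apply Subtype.ext
    show A₀ (ContinuousLinearMap.adjoint A₀ ↑x) = ↑x
    rw [hAA]; exact hPid _ x.2
  have hba : b * a = 1 := mul_eq_one_comm.1 hab
  have hAadA : ∀ x, ContinuousLinearMap.adjoint A₀ (A₀ x) = P x := by
    intro x
    have h2 := congrArg Subtype.val (LinearMap.ext_iff.1 hba ⟨P x, hPmem x⟩)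
    have h3 : ContinuousLinearMap.adjoint A₀ (A₀ (P x)) = P x := h2
    rw [← hAP x]; exact h3
  refine ⟨?_, ?_, ?_⟩
  · ext x; exact hAA x
  · ext x; exact hAadA x
  · intro ω
    have hX1 : SXhalf (SXinvhalf (X ω)) = X ω := by
      rw [app SXhalf SXinvhalf P hSXhalfinv.2]; exact hPid _ (hXM ω)
    have : ContinuousLinearMap.adjoint A₀ (SZinvhalf (Z ω))
        = ContinuousLinearMap.adjoint A₀ (A₀ (SXinvhalf (X ω))) := by
      simp only [hA₀, ContinuousLinearMap.comp_apply]
      rw [hX1, ← hZ ω]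
    rw [this, hAadA]
    rw [app P SXinvhalf SXinvhalf hSXinvhalfP.2]
end

section
/- Let D be a diagonal matrix of operators on the direct sum Hilbert space H = H₁ × ⋯ × Hₚ (i.e., D_{ij} = 0 for i ≠ j and each D_{ii} self-adjoint) of finite rank d, with spectral decomposition D = Σ_{k=1}^d τ_k (ψ_k ⊗ ψ_k) where the eigenvalues τ_1,...,τ_d are distinct and nonzero. Then each eigenvector ψ_k is canonical, i.e., has at most one nonzero component. -/
open scoped RealInnerProductSpace
open ContinuousLinearMap
set_option maxRecDepth 8000
set_option maxHeartbeats 1000000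

instance piLp_completeSpace {p : ℕ} (H : Fin p → Type*)
    [∀ i, UniformSpace (H i)] [∀ i, CompleteSpace (H i)] :
    CompleteSpace (PiLp 2 H) := PiLp.completeSpace 2 H

/-- If `D` is a diagonal matrix of operators on
`H = H₁ × ⋯ × Hₚ` (off-diagonal entries zero, diagonal entries self-adjoint)
of finite rank `d`, with spectral decomposition `D = Σ_k τ_k (ψ_k ⊗ ψ_k)`
where the `τ_k` are distinct and nonzero, then each eigenvector `ψ_k` is
canonical: it has at most one nonzero component. -/
theorem stmt_16 {p : ℕ} (H : Fin p → Type*)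
    [∀ i, NormedAddCommGroup (H i)] [∀ i, InnerProductSpace ℝ (H i)]
    [∀ i, CompleteSpace (H i)]
    (Dk : ∀ i : Fin p, H i →L[ℝ] H i)
    (hDk : ∀ i, IsSelfAdjoint (Dk i))
    (D : PiLp 2 H →L[ℝ] PiLp 2 H)
    -- `D` is the diagonal matrix of operators with diagonal entries `Dk`
    (hD : ∀ f : PiLp 2 H, ∀ i : Fin p, D f i = Dk i (f i))
    {d : ℕ} (ψ : Fin d → PiLp 2 H) (τ : Fin d → ℝ)
    (hψ : Orthonormal ℝ ψ)
    (hτ : Function.Injective τ) (hτ0 : ∀ k, τ k ≠ 0)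
    -- spectral decomposition `D = Σ_k τ_k (ψ_k ⊗ ψ_k)`
    (hspec : D = ∑ k : Fin d, τ k • ((innerSL ℝ (ψ k)).smulRight (ψ k))) :
    ∀ k : Fin d, ∀ i j : Fin p, ψ k i ≠ 0 → ψ k j ≠ 0 → i = j := by
  intro k i j hi hj
  by_contra hij
  have horth := orthonormal_iff_ite.mp hψ
  obtain ⟨φ, hφ⟩ : ∃ φ : PiLp 2 H, φ = Pi.single i (ψ k i) := ⟨WithLp.toLp 2 (Pi.single i (ψ k i)), rfl⟩
  -- eigen equation for each ψ m
  have heig : ∀ m, D (ψ m) = τ m • ψ m := by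
    intro m
    rw [hspec]
    simp only [ContinuousLinearMap.sum_apply, ContinuousLinearMap.smul_apply,
      ContinuousLinearMap.smulRight_apply, innerSL_apply_apply]
    rw [Finset.sum_eq_single m]
    · rw [horth m m]; simp
    · intro n _ hn
      rw [horth n m, if_neg hn]; simp
    · simp
  have hDψk : ∀ l, Dk l (ψ k l) = τ k • ψ k l := by
    intro l
    have h1 := hD (ψ k) l
    rw [heig k] at h1
    rw [← h1]; rfl
  have hDφ : D φ = τ k • φ := by
    ext l
    rw [hD φ l]
    show Dk l (φ l) = τ k • φ l
    rw [hφ]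
    by_cases hl : l = i
    · subst hl
      rw [Pi.single_eq_same]
      exact hDψk _
    · rw [Pi.single_eq_of_ne hl, map_zero, smul_zero]
  -- sum form of D φ
  have hsum : τ k • φ = ∑ m, (τ m * inner ℝ (ψ m) φ) • ψ m := by
    rw [← hDφ, hspec, ContinuousLinearMap.sum_apply]
    refine Finset.sum_congr rfl fun m _ => ?_
    rw [ContinuousLinearMap.smul_apply, ContinuousLinearMap.smulRight_apply,
      innerSL_apply_apply, smul_smul]
  -- coefficients vanish for m ≠ k
  have hcoef : ∀ n, n ≠ k → inner ℝ (ψ n) φ = (0 : ℝ) := by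
    intro n hn
    have h2 : (inner ℝ (ψ n) (τ k • φ) : ℝ) = inner ℝ (ψ n) (∑ m, (τ m * inner ℝ (ψ m) φ) • ψ m) := by
      rw [hsum]
    rw [inner_smul_right, inner_sum] at h2
    simp only [inner_smul_right] at h2
    rw [Finset.sum_eq_single n] at h2
    · rw [horth n n, if_pos rfl, mul_one] at h2
      by_contra hc
      exact hn (hτ (mul_right_cancel₀ hc h2)).symm
    · intro m _ hm
      rw [horth n m, if_neg (fun h => hm h.symm)]; ring
    · simp
  -- hence φ = c • ψ k
  have hck : τ k • φ = (τ k * inner ℝ (ψ k) φ) • ψ k := by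
    rw [hsum, Finset.sum_eq_single k]
    · intro m _ hm
      rw [hcoef m hm]; simp
    · simp
  have hφeq : φ = (inner ℝ (ψ k) φ : ℝ) • ψ k := by
    have := hck
    rw [mul_smul] at this
    exact smul_right_injective _ (hτ0 k) this
  -- compute the coefficient
  have hc : (inner ℝ (ψ k) φ : ℝ) = inner ℝ (ψ k i) (ψ k i) := by
    rw [PiLp.inner_apply, Finset.sum_eq_single i]
    · rw [hφ, Pi.single_eq_same]
    · intro l _ hl
      simp [hφ, Pi.single_eq_of_ne hl]
    · simp
  have hcne : (inner ℝ (ψ k) φ : ℝ) ≠ 0 := by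
    rw [hc]
    exact fun h => hi (inner_self_eq_zero.mp h)
  -- evaluate at j
  have hj0 : φ j = 0 := by
    rw [hφ, Pi.single_eq_of_ne (Ne.symm hij)]
  have : (inner ℝ (ψ k) φ : ℝ) • ψ k j = 0 := by
    rw [← hj0]
    conv_lhs => rw [show (inner ℝ (ψ k) φ : ℝ) • ψ k j = ((inner ℝ (ψ k) φ : ℝ) • ψ k) j from rfl]
    rw [← hφeq]
  exact hj (by
    rcases smul_eq_zero.mp this with h | h
    · exact absurd h hcne
    · exact h)
end
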